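/- arXiv:1011.5237 — 2 statements merged into one kernel-verified Lean document; each statement's English description precedes it below -/
import Mathlib

section
/- Let T be a product of two orthogonal projections on a Hilbert space H with closed range. Then ‖P_{R(T)} − P_{N(T)^⊥}‖ < 1, while for every other pair (P, Q) of orthogonal projections with T = PQ and (P,Q) ≠ (P_{R(T)}, P_{N(T)^⊥}), one has ‖P − Q‖ = 1. -/
open ContinuousLinearMap Submodule LinearMap

variable {H : Type*} [NormedAddCommGroup H] [InnerProductSpace ℂ H] [CompleteSpace H]

/-- `P` is an orthogonal projection: `P² = P = P*`. -/
def IsOrthoProj (P : H →L[ℂ] H) : Prop :=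
  P ∘L P = P ∧ ContinuousLinearMap.adjoint P = P

/-- The orthogonal projection onto a (complete, i.e. closed) subspace,
as an operator on `H`. -/
noncomputable def projOn (K : Submodule ℂ H) [CompleteSpace K] : H →L[ℂ] H :=
  K.subtypeL.comp (orthogonalProjection K)

/-- The orthogonal projection onto a closed subspace, as an operator on `H`. -/
noncomputable def projOnc (K : Submodule ℂ H) (hK : IsClosed (K : Set H)) : H →L[ℂ] H :=
  haveI : CompleteSpace K := hK.completeSpace_coe
  K.subtypeL.comp (orthogonalProjection K)

local notation "⟪" x ", " y "⟫" => @inner ℂ _ _ x y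

lemma IsOrthoProj.apply_apply {P : H →L[ℂ] H} (hP : IsOrthoProj P) (x : H) :
    P (P x) = P x := by
  conv_rhs => rw [← hP.1]
  rfl

lemma IsOrthoProj.inner_left' {P : H →L[ℂ] H} (hP : IsOrthoProj P) (x y : H) :
    ⟪P x, y⟫ = ⟪x, P y⟫ := by
  conv_lhs => rw [← hP.2]
  exact ContinuousLinearMap.adjoint_inner_left P y x

lemma projOn_mem (K : Submodule ℂ H) [CompleteSpace K] (x : H) : projOn K x ∈ K :=
  (orthogonalProjection K x).2

lemma projOn_eq_of {K : Submodule ℂ H} [CompleteSpace K] {u v : H} (hu : u ∈ K)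
    (h : v - u ∈ Kᗮ) : projOn K v = u :=
  Submodule.eq_starProjection_of_mem_orthogonal hu h

lemma sub_projOn_mem_orth (K : Submodule ℂ H) [CompleteSpace K] (x : H) :
    x - projOn K x ∈ Kᗮ :=
  Submodule.sub_starProjection_mem_orthogonal x

lemma projOn_eq_self {K : Submodule ℂ H} [CompleteSpace K] {x : H} (hx : x ∈ K) :
    projOn K x = x :=
  projOn_eq_of hx (by simp)

lemma projOn_isOrthoProj (K : Submodule ℂ H) [CompleteSpace K] :
    IsOrthoProj (projOn K) := by
  constructor
  · ext x
    exact projOn_eq_self (projOn_mem K x)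
  · exact (isSelfAdjoint_starProjection K).adjoint_eq

lemma IsOrthoProj.pyth {P : H →L[ℂ] H} (hP : IsOrthoProj P) (u : H) :
    ‖P u‖ ^ 2 + ‖u - P u‖ ^ 2 = ‖u‖ ^ 2 := by
  have horth : ⟪P u, u - P u⟫ = 0 := by
    rw [hP.inner_left']
    simp [map_sub, hP.apply_apply]
  have hdecomp : u = P u + (u - P u) := by abel
  have h := norm_add_sq_eq_norm_sq_add_norm_sq_of_inner_eq_zero _ _ horth
  rw [← hdecomp] at h
  simp only [pow_two]
  linarith

lemma IsOrthoProj.norm_apply_le {P : H →L[ℂ] H} (hP : IsOrthoProj P) (u : H) :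
    ‖P u‖ ≤ ‖u‖ := by
  have h := hP.pyth u
  nlinarith [sq_nonneg (‖u - P u‖), norm_nonneg (P u), norm_nonneg u]

lemma IsOrthoProj.diff_sq {P Q : H →L[ℂ] H} (hP : IsOrthoProj P) (hQ : IsOrthoProj Q)
    (x : H) :
    ‖P x - Q x‖ ^ 2 = ‖P (x - Q x)‖ ^ 2 + ‖Q x - P (Q x)‖ ^ 2 := by
  have horth : ⟪P (x - Q x), P (Q x) - Q x⟫ = 0 := by
    rw [hP.inner_left']
    simp [map_sub, hP.apply_apply]
  have hdecomp : P x - Q x = P (x - Q x) + (P (Q x) - Q x) := by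
    rw [map_sub]; abel
  have h := norm_add_sq_eq_norm_sq_add_norm_sq_of_inner_eq_zero _ _ horth
  rw [hdecomp]
  rw [norm_sub_rev (Q x) (P (Q x))]
  simp only [pow_two]
  linarith

lemma IsOrthoProj.diff_norm_le_one {P Q : H →L[ℂ] H} (hP : IsOrthoProj P)
    (hQ : IsOrthoProj Q) : ‖P - Q‖ ≤ 1 := by
  apply opNorm_le_bound _ zero_le_one
  intro x
  rw [one_mul, ContinuousLinearMap.sub_apply]
  have h1 := hP.diff_sq hQ x
  have h2 : ‖P (x - Q x)‖ ≤ ‖x - Q x‖ := hP.norm_apply_le _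
  have h3 : ‖Q x - P (Q x)‖ ^ 2 ≤ ‖Q x‖ ^ 2 := by
    have := hP.pyth (Q x)
    nlinarith [sq_nonneg (‖P (Q x)‖)]
  have h4 := hQ.pyth x
  have h2' : ‖P (x - Q x)‖ ^ 2 ≤ ‖x - Q x‖ ^ 2 := pow_le_pow_left₀ (norm_nonneg _) h2 2
  have hsq : ‖P x - Q x‖ ^ 2 ≤ ‖x‖ ^ 2 := by linarith
  exact le_of_pow_le_pow_left₀ two_ne_zero (norm_nonneg x) hsq

lemma IsOrthoProj.mem_range_iff {P : H →L[ℂ] H} (hP : IsOrthoProj P) {x : H} :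
    x ∈ LinearMap.range (P : H →ₗ[ℂ] H) ↔ P x = x := by
  constructor
  · rintro ⟨y, rfl⟩; exact hP.apply_apply y
  · intro h; exact ⟨x, h⟩

lemma IsOrthoProj.mem_range_orth_iff {P : H →L[ℂ] H} (hP : IsOrthoProj P) {x : H} :
    x ∈ (LinearMap.range (P : H →ₗ[ℂ] H))ᗮ ↔ P x = 0 := by
  rw [Submodule.mem_orthogonal]
  constructor
  · intro h
    have h0 : ⟪P x, x⟫ = 0 := h _ (LinearMap.mem_range_self _ x)
    have h1 : ⟪P x, P x⟫ = 0 := by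
      rw [hP.inner_left', hP.apply_apply, ← inner_conj_symm, h0, map_zero]
    exact inner_self_eq_zero.mp h1
  · rintro h _ ⟨y, rfl⟩
    rw [ContinuousLinearMap.coe_coe, hP.inner_left', h, inner_zero_right]

lemma IsOrthoProj.isClosed_range {P : H →L[ℂ] H} (hP : IsOrthoProj P) :
    IsClosed ((LinearMap.range (P : H →ₗ[ℂ] H) : Submodule ℂ H) : Set H) := by
  have h : ((LinearMap.range (P : H →ₗ[ℂ] H) : Submodule ℂ H) : Set H) = {x | P x = x} := by
    ext x; exact hP.mem_range_iff
  rw [h]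
  exact isClosed_eq P.continuous continuous_id

set_option maxHeartbeats 1000000 in
theorem stmt13 (T : H →L[ℂ] H)
    (hX : ∃ P Q : H →L[ℂ] H, IsOrthoProj P ∧ IsOrthoProj Q ∧ T = P ∘L Q)
    (hcl : IsClosed ((LinearMap.range (T : H →ₗ[ℂ] H) : Submodule ℂ H) : Set H)) :
    ‖projOnc (LinearMap.range (T : H →ₗ[ℂ] H)) hcl - projOn (LinearMap.ker (T : H →ₗ[ℂ] H))ᗮ‖ < 1 ∧
      ∀ P Q : H →L[ℂ] H, IsOrthoProj P → IsOrthoProj Q → T = P ∘L Q →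
        ¬(P = projOnc (LinearMap.range (T : H →ₗ[ℂ] H)) hcl ∧ Q = projOn (LinearMap.ker (T : H →ₗ[ℂ] H))ᗮ) →
        ‖P - Q‖ = 1 := by
  obtain ⟨P0, Q0, hP0, hQ0, hT0⟩ := hX
  haveI hAc : CompleteSpace (LinearMap.range (T : H →ₗ[ℂ] H)) := hcl.completeSpace_coe
  haveI hkerc : CompleteSpace (LinearMap.ker (T : H →ₗ[ℂ] H)) :=
    (ContinuousLinearMap.isClosed_ker T).completeSpace_coe
  have hPA : projOnc (LinearMap.range (T : H →ₗ[ℂ] H)) hcl = projOn (LinearMap.range (T : H →ₗ[ℂ] H)) := rfl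
  set A : Submodule ℂ H := LinearMap.range (T : H →ₗ[ℂ] H) with hA
  set Kc : Submodule ℂ H := (LinearMap.ker (T : H →ₗ[ℂ] H))ᗮ with hKcdef
  have hT0' : ∀ x, T x = P0 (Q0 x) := fun x => by rw [hT0]; rfl
  have hTadj : ContinuousLinearMap.adjoint T = Q0 ∘L P0 := by
    rw [hT0, ContinuousLinearMap.adjoint_comp, hP0.2, hQ0.2]
  have hTadj' : ∀ x, ContinuousLinearMap.adjoint T x = Q0 (P0 x) := fun x => by
    rw [hTadj]; rfl
  have hKcOrth : Kcᗮ = LinearMap.ker (T : H →ₗ[ℂ] H) := Submodule.orthogonal_orthogonal _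
  have hadj3 : ∀ z, ContinuousLinearMap.adjoint T (T (ContinuousLinearMap.adjoint T z))
      = ContinuousLinearMap.adjoint T (ContinuousLinearMap.adjoint T z) := by
    intro z
    simp only [hT0', hTadj', hP0.apply_apply, hQ0.apply_apply]
  have h1 : LinearMap.ker (T : H →ₗ[ℂ] H) = (LinearMap.range (ContinuousLinearMap.adjoint T : H →ₗ[ℂ] H))ᗮ := by
    ext z
    rw [LinearMap.mem_ker, Submodule.mem_orthogonal]
    constructor
    · rintro hz _ ⟨y, rfl⟩
      rw [ContinuousLinearMap.coe_coe] at hz ⊢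
      rw [ContinuousLinearMap.adjoint_inner_left, hz, inner_zero_right]
    · intro h
      have h2 := h (ContinuousLinearMap.adjoint T (T z)) ⟨T z, rfl⟩
      rw [ContinuousLinearMap.adjoint_inner_left] at h2
      exact inner_self_eq_zero.mp h2
  have hKclosure : Kc = (LinearMap.range (ContinuousLinearMap.adjoint T : H →ₗ[ℂ] H)).topologicalClosure := by
    rw [hKcdef, h1, Submodule.orthogonal_orthogonal_eq_closure]
  have hkey : ∀ x ∈ Kc,
      ContinuousLinearMap.adjoint T (T x) = ContinuousLinearMap.adjoint T x := by
    intro x hx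
    have hsub : (LinearMap.range (ContinuousLinearMap.adjoint T : H →ₗ[ℂ] H)).topologicalClosure ≤
        LinearMap.ker (((ContinuousLinearMap.adjoint T).comp T - ContinuousLinearMap.adjoint T : H →L[ℂ] H) : H →ₗ[ℂ] H) := by
      apply Submodule.topologicalClosure_minimal
      · rintro _ ⟨z, rfl⟩
        rw [LinearMap.mem_ker]
        simp only [ContinuousLinearMap.coe_coe, ContinuousLinearMap.sub_apply, ContinuousLinearMap.comp_apply]
        rw [hadj3 z, sub_self]
      · exact ContinuousLinearMap.isClosed_ker _
    have hx' := hsub (hKclosure ▸ hx)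
    rw [LinearMap.mem_ker] at hx'
    have hx'' : ContinuousLinearMap.adjoint T (T x) - ContinuousLinearMap.adjoint T x = 0 := hx'
    rw [sub_eq_zero] at hx''
    exact hx''
  -- Step A : the canonical factorization
  have stepA : ∀ x ∈ Kc, projOn A x = T x := by
    intro x hx
    apply projOn_eq_of (LinearMap.mem_range_self (T : H →ₗ[ℂ] H) x)
    rw [Submodule.mem_orthogonal]
    rintro _ ⟨y, rfl⟩
    rw [ContinuousLinearMap.coe_coe, inner_sub_right, ← ContinuousLinearMap.adjoint_inner_right,
      ← ContinuousLinearMap.adjoint_inner_right, hkey x hx, sub_self]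
  have hTfix : ∀ x, T (projOn Kc x) = T x := by
    intro x
    have hker := sub_projOn_mem_orth Kc x
    rw [hKcOrth] at hker
    have h0 : T (x - projOn Kc x) = 0 := hker
    rw [map_sub, sub_eq_zero] at h0
    exact h0.symm
  have hfact : ∀ x, T x = projOn A (projOn Kc x) := by
    intro x
    rw [stepA _ (projOn_mem Kc x), hTfix]
  -- the restricted bijection and the constant c
  have hfactC : T = (projOn A) ∘L (projOn Kc) := by
    ext x; exact hfact x
  have hadjfact : ContinuousLinearMap.adjoint T = (projOn Kc) ∘L (projOn A) := by
    have h := congrArg ContinuousLinearMap.adjoint hfactC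
    rwa [ContinuousLinearMap.adjoint_comp, (projOn_isOrthoProj A).2,
      (projOn_isOrthoProj Kc).2] at h
  have hTstar : ∀ y ∈ A, ContinuousLinearMap.adjoint T y = projOn Kc y := by
    intro y hy
    rw [hadjfact]
    show projOn Kc (projOn A y) = projOn Kc y
    rw [projOn_eq_self hy]
  obtain ⟨Cnn, hanti⟩ : ∃ C : NNReal,
      AntilipschitzWith C ⇑((T.comp (Submodule.subtypeL Kc)).codRestrict A
        (fun x => LinearMap.mem_range_self (T : H →ₗ[ℂ] H) (x : H))) := by
    set Tr := (T.comp (Submodule.subtypeL Kc)).codRestrict A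
        (fun x => LinearMap.mem_range_self (T : H →ₗ[ℂ] H) (x : H)) with hTrdef
    have hinj : LinearMap.ker (Tr : Kc →ₗ[ℂ] A) = ⊥ := by
      rw [Submodule.eq_bot_iff]
      intro u hu
      rw [LinearMap.mem_ker] at hu
      have h0 : T (u : H) = 0 := congrArg Subtype.val hu
      have hmem : (u : H) ∈ LinearMap.ker (T : H →ₗ[ℂ] H) := h0
      have hz := Submodule.inner_right_of_mem_orthogonal hmem u.2
      exact Subtype.ext (inner_self_eq_zero.mp hz)
    have hsurj : LinearMap.range (Tr : Kc →ₗ[ℂ] A) = ⊤ := by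
      rw [LinearMap.range_eq_top]
      rintro ⟨a, ha⟩
      obtain ⟨x, rfl⟩ := ha
      refine ⟨⟨projOn Kc x, projOn_mem _ _⟩, ?_⟩
      apply Subtype.ext
      exact hTfix x
    have h := (ContinuousLinearEquiv.ofBijective Tr hinj hsurj).antilipschitz
    rw [ContinuousLinearEquiv.coeFn_ofBijective] at h
    exact ⟨_, h⟩
  have hbound : ∀ x ∈ Kc, ‖x‖ ≤ (Cnn : ℝ) * ‖T x‖ := by
    intro x hx
    have h := ContinuousLinearMap.bound_of_antilipschitz
      ((T.comp (Submodule.subtypeL Kc)).codRestrict A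
        (fun x => LinearMap.mem_range_self (T : H →ₗ[ℂ] H) (x : H))) hanti ⟨x, hx⟩
    exact h
  set Cr : ℝ := max (Cnn : ℝ) 1 with hCr
  have hCpos : 0 < Cr := lt_of_lt_of_le one_pos (le_max_right _ _)
  have hbound' : ∀ x ∈ Kc, ‖x‖ ≤ Cr * ‖T x‖ := by
    intro x hx
    refine le_trans (hbound x hx) ?_
    exact mul_le_mul_of_nonneg_right (le_max_left _ _) (norm_nonneg _)
  set c : ℝ := Cr⁻¹ with hc
  have hcpos : 0 < c := inv_pos.mpr hCpos
  have hcCr : c * Cr = 1 := inv_mul_cancel₀ hCpos.ne'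
  have hc1 : c ≤ 1 := by
    rw [hc]
    rw [inv_le_one_iff₀]
    right; exact le_max_right _ _
  -- lower bounds
  have hlbA : ∀ x ∈ Kc, c * ‖x‖ ≤ ‖projOn A x‖ := by
    intro x hx
    rw [stepA x hx]
    have h := hbound' x hx
    nlinarith [norm_nonneg (T x), hcpos.le]
  have hlbK : ∀ y ∈ A, c * ‖y‖ ≤ ‖projOn Kc y‖ := by
    rintro _ ⟨x0, rfl⟩
    rw [ContinuousLinearMap.coe_coe, ← hTfix x0]
    set x : H := projOn Kc x0 with hxdef
    have hxKc : x ∈ Kc := projOn_mem _ _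
    have hxb : ‖x‖ ≤ Cr * ‖T x‖ := hbound' x hxKc
    have hi1 : ⟪projOn Kc (T x), x⟫ = ⟪T x, T x⟫ := by
      rw [← hTstar (T x) (LinearMap.mem_range_self (T : H →ₗ[ℂ] H) x)]
      exact ContinuousLinearMap.adjoint_inner_left T x (T x)
    have hi2 : ‖T x‖ ^ 2 ≤ ‖projOn Kc (T x)‖ * ‖x‖ := by
      calc ‖T x‖ ^ 2 = RCLike.re ⟪T x, T x⟫ := (inner_self_eq_norm_sq (𝕜 := ℂ) (T x)).symm
        _ = RCLike.re ⟪projOn Kc (T x), x⟫ := by rw [hi1]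
        _ ≤ ‖⟪projOn Kc (T x), x⟫‖ := RCLike.re_le_norm _
        _ ≤ ‖projOn Kc (T x)‖ * ‖x‖ := norm_inner_le_norm _ _
    rcases eq_or_lt_of_le (norm_nonneg (T x)) with h0 | h0
    · rw [← h0, mul_zero]; exact norm_nonneg _
    · have h3 : ‖T x‖ ^ 2 ≤ ‖projOn Kc (T x)‖ * (Cr * ‖T x‖) :=
        le_trans hi2 (mul_le_mul_of_nonneg_left hxb (norm_nonneg _))
      have h4 : c * ‖T x‖ ^ 2 ≤ c * (‖projOn Kc (T x)‖ * (Cr * ‖T x‖)) :=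
        mul_le_mul_of_nonneg_left h3 hcpos.le
      have h5 : c * (‖projOn Kc (T x)‖ * (Cr * ‖T x‖)) = ‖projOn Kc (T x)‖ * ‖T x‖ := by
        calc c * (‖projOn Kc (T x)‖ * (Cr * ‖T x‖))
            = (c * Cr) * (‖projOn Kc (T x)‖ * ‖T x‖) := by ring
          _ = ‖projOn Kc (T x)‖ * ‖T x‖ := by rw [hcCr, one_mul]
      have h6 : (c * ‖T x‖) * ‖T x‖ ≤ ‖projOn Kc (T x)‖ * ‖T x‖ := by
        calc (c * ‖T x‖) * ‖T x‖ = c * ‖T x‖ ^ 2 := by ring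
          _ ≤ c * (‖projOn Kc (T x)‖ * (Cr * ‖T x‖)) := h4
          _ = ‖projOn Kc (T x)‖ * ‖T x‖ := h5
      exact (mul_le_mul_iff_of_pos_right h0).mp h6
  -- the two quantitative bounds
  have hbound1 : ∀ y ∈ Kc, ‖y - projOn A y‖ ^ 2 ≤ (1 - c ^ 2) * ‖y‖ ^ 2 := by
    intro y hy
    have hpy := (projOn_isOrthoProj A).pyth y
    have hAy := hlbA y hy
    have hsq : (c * ‖y‖) ^ 2 ≤ ‖projOn A y‖ ^ 2 :=
      pow_le_pow_left₀ (by positivity) hAy 2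
    have hr1 : (c * ‖y‖) ^ 2 = c ^ 2 * ‖y‖ ^ 2 := by ring
    have hr2 : (1 - c ^ 2) * ‖y‖ ^ 2 = ‖y‖ ^ 2 - c ^ 2 * ‖y‖ ^ 2 := by ring
    linarith
  have hbound2 : ∀ z ∈ Kcᗮ, ‖projOn A z‖ ^ 2 ≤ (1 - c ^ 2) * ‖z‖ ^ 2 := by
    intro z hz
    set s : ℝ := Real.sqrt (1 - c ^ 2) with hs
    have hc2 : c ^ 2 ≤ 1 := by nlinarith
    have hs2 : s ^ 2 = 1 - c ^ 2 := Real.sq_sqrt (by linarith)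
    have hsnn : (0:ℝ) ≤ s := Real.sqrt_nonneg _
    set w : H := projOn A z with hwdef
    have hwA : w ∈ A := projOn_mem _ _
    have hzw : z - w ∈ Aᗮ := sub_projOn_mem_orth _ _
    have e1 : RCLike.re ⟪w, z⟫ = ‖w‖ ^ 2 := by
      have h0 : ⟪w, z - w⟫ = 0 := Submodule.inner_right_of_mem_orthogonal hwA hzw
      rw [inner_sub_right, sub_eq_zero] at h0
      rw [h0]
      exact inner_self_eq_norm_sq (𝕜 := ℂ) w
    have e2 : ⟪w, z⟫ = ⟪w - projOn Kc w, z⟫ := by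
      have h0 : ⟪projOn Kc w, z⟫ = 0 :=
        Submodule.inner_right_of_mem_orthogonal (projOn_mem Kc w) hz
      rw [inner_sub_left, h0, sub_zero]
    have e3 : ‖w - projOn Kc w‖ ^ 2 ≤ (1 - c ^ 2) * ‖w‖ ^ 2 := by
      have hpw := (projOn_isOrthoProj Kc).pyth w
      have hlw := hlbK w hwA
      have hsq : (c * ‖w‖) ^ 2 ≤ ‖projOn Kc w‖ ^ 2 :=
        pow_le_pow_left₀ (by positivity) hlw 2
      have hr1 : (c * ‖w‖) ^ 2 = c ^ 2 * ‖w‖ ^ 2 := by ring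
      have hr2 : (1 - c ^ 2) * ‖w‖ ^ 2 = ‖w‖ ^ 2 - c ^ 2 * ‖w‖ ^ 2 := by ring
      linarith
    have e4 : ‖w‖ ^ 2 ≤ ‖w - projOn Kc w‖ * ‖z‖ := by
      rw [← e1, e2]
      calc RCLike.re ⟪w - projOn Kc w, z⟫ ≤ ‖⟪w - projOn Kc w, z⟫‖ := RCLike.re_le_norm _
        _ ≤ ‖w - projOn Kc w‖ * ‖z‖ := norm_inner_le_norm _ _
    have e5 : ‖w - projOn Kc w‖ ≤ s * ‖w‖ := by
      apply le_of_pow_le_pow_left₀ two_ne_zero (by positivity)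
      rw [mul_pow, hs2]
      exact e3
    have e6 : ‖w‖ ≤ s * ‖z‖ := by
      rcases eq_or_lt_of_le (norm_nonneg w) with h0 | h0
      · rw [← h0]; positivity
      · have h4 : ‖w‖ ^ 2 ≤ s * ‖w‖ * ‖z‖ :=
          le_trans e4 (mul_le_mul_of_nonneg_right e5 (norm_nonneg _))
        nlinarith
    calc ‖w‖ ^ 2 ≤ (s * ‖z‖) ^ 2 := pow_le_pow_left₀ (norm_nonneg w) e6 2
      _ = (1 - c ^ 2) * ‖z‖ ^ 2 := by rw [mul_pow, hs2]
  -- pointwise estimate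
  have keyx : ∀ x, ‖projOn A x - projOn Kc x‖ ^ 2 ≤ (1 - c ^ 2) * ‖x‖ ^ 2 := by
    intro x
    have hid := (projOn_isOrthoProj A).diff_sq (projOn_isOrthoProj Kc) x
    have h1 := hbound2 (x - projOn Kc x) (sub_projOn_mem_orth _ _)
    have h2 := hbound1 (projOn Kc x) (projOn_mem _ _)
    have h3 : ‖projOn Kc x‖ ^ 2 + ‖x - projOn Kc x‖ ^ 2 = ‖x‖ ^ 2 := by
      have h0 : ⟪projOn Kc x, x - projOn Kc x⟫ = 0 :=
        Submodule.inner_right_of_mem_orthogonal (projOn_mem Kc x) (sub_projOn_mem_orth _ _)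
      have h4 := norm_add_sq_eq_norm_sq_add_norm_sq_of_inner_eq_zero _ _ h0
      have h5 : projOn Kc x + (x - projOn Kc x) = x := by abel
      rw [h5] at h4
      simp only [pow_two]
      linarith
    nlinarith [hid]
  constructor
  · -- Part 1 : the canonical pair has norm < 1
    rw [hPA]
    set s : ℝ := Real.sqrt (1 - c ^ 2) with hs
    have hc2 : c ^ 2 ≤ 1 := by nlinarith
    have hs2 : s ^ 2 = 1 - c ^ 2 := Real.sq_sqrt (by linarith)
    have hsnn : (0:ℝ) ≤ s := Real.sqrt_nonneg _
    have hslt : s < 1 := by nlinarith [mul_pos hcpos hcpos]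
    have hnorm : ‖projOn A - projOn Kc‖ ≤ s := by
      apply ContinuousLinearMap.opNorm_le_bound _ hsnn
      intro x
      rw [ContinuousLinearMap.sub_apply]
      apply le_of_pow_le_pow_left₀ two_ne_zero (by positivity)
      rw [mul_pow, hs2]
      exact keyx x
    exact lt_of_le_of_lt hnorm hslt
  · -- Part 2 : every other factorization pair has norm 1
    intro P Q hP hQ hTPQ hne
    by_contra hne1
    have hle : ‖P - Q‖ ≤ 1 := hP.diff_norm_le_one hQ
    have hlt : ‖P - Q‖ < 1 := lt_of_le_of_ne hle hne1
    have hsmall : ∀ u : H, P u = u → Q u = 0 → u = 0 := by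
      intro u hu1 hu2
      by_contra h0
      have hPQu : (P - Q) u = u := by
        rw [ContinuousLinearMap.sub_apply, hu1, hu2, sub_zero]
      have h3 : ‖u‖ ≤ ‖P - Q‖ * ‖u‖ := by
        conv_lhs => rw [← hPQu]
        exact (P - Q).le_opNorm u
      have h4 : 0 < ‖u‖ := norm_pos_iff.mpr h0
      nlinarith
    have hsmall' : ∀ u : H, Q u = u → P u = 0 → u = 0 := by
      intro u hu1 hu2
      by_contra h0
      have hPQu : (P - Q) u = -u := by
        rw [ContinuousLinearMap.sub_apply, hu1, hu2, zero_sub]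
      have h3 : ‖u‖ ≤ ‖P - Q‖ * ‖u‖ := by
        have := (P - Q).le_opNorm u
        rwa [hPQu, norm_neg] at this
      have h4 : 0 < ‖u‖ := norm_pos_iff.mpr h0
      nlinarith
    have hTPQ' : ∀ x, T x = P (Q x) := fun x => by rw [hTPQ]; rfl
    have hadjT : ContinuousLinearMap.adjoint T = Q ∘L P := by
      rw [hTPQ, ContinuousLinearMap.adjoint_comp, hP.2, hQ.2]
    -- P equals the projection onto A
    have hPeq : P = projOn A := by
      ext x
      have horth : x - P x ∈ Aᗮ := by
        rw [Submodule.mem_orthogonal]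
        rintro _ ⟨y, rfl⟩
        rw [ContinuousLinearMap.coe_coe, hTPQ' y, hP.inner_left', map_sub, hP.apply_apply, sub_self, inner_zero_right]
      have hPr : P (P x - projOn A (P x)) = P x - projOn A (P x) := by
        rw [map_sub, hP.apply_apply]
        congr 1
        obtain ⟨y, hy⟩ := projOn_mem A (P x)
        rw [← hy, ContinuousLinearMap.coe_coe, hTPQ' y, hP.apply_apply]
      have hQr : Q (P x - projOn A (P x)) = 0 := by
        have hr : P x - projOn A (P x) ∈ Aᗮ := sub_projOn_mem_orth _ _
        have h0 : ContinuousLinearMap.adjoint T (P x - projOn A (P x)) = 0 := by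
          rw [← inner_self_eq_zero (𝕜 := ℂ)]
          rw [ContinuousLinearMap.adjoint_inner_right]
          exact Submodule.inner_right_of_mem_orthogonal
            (LinearMap.mem_range_self (T : H →ₗ[ℂ] H) _) hr
        rw [hadjT] at h0
        have h0' : Q (P (P x - projOn A (P x))) = 0 := h0
        rwa [hPr] at h0'
      have hr0 : P x - projOn A (P x) = 0 := hsmall _ hPr hQr
      rw [sub_eq_zero] at hr0
      have hmem : P x ∈ A := by rw [hr0]; exact projOn_mem _ _
      exact (projOn_eq_of hmem horth).symm
    -- Q equals the projection onto Kc
    have hkerQT : LinearMap.ker (Q : H →ₗ[ℂ] H) ≤ LinearMap.ker (T : H →ₗ[ℂ] H) := by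
      intro u hu
      rw [LinearMap.mem_ker, ContinuousLinearMap.coe_coe] at hu ⊢
      rw [hTPQ' u, hu, map_zero]
    haveI hQrc : CompleteSpace (LinearMap.range (Q : H →ₗ[ℂ] H)) := hQ.isClosed_range.completeSpace_coe
    have hkerQ : LinearMap.ker (Q : H →ₗ[ℂ] H) = (LinearMap.range (Q : H →ₗ[ℂ] H))ᗮ := by
      ext u
      rw [LinearMap.mem_ker, hQ.mem_range_orth_iff, ContinuousLinearMap.coe_coe]
    have hKcQ : ∀ u ∈ Kc, Q u = u := by
      intro u hu
      have h2 : u ∈ (LinearMap.ker (Q : H →ₗ[ℂ] H))ᗮ := Submodule.orthogonal_le hkerQT hu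
      rw [hkerQ, Submodule.orthogonal_orthogonal] at h2
      exact hQ.mem_range_iff.mp h2
    have hQeq : Q = projOn Kc := by
      ext x
      have horth : x - Q x ∈ Kcᗮ := by
        rw [hKcOrth]
        have h0 : T (x - Q x) = 0 := by
          rw [hTPQ' (x - Q x), map_sub, map_sub, hQ.apply_apply, sub_self]
        exact h0
      have hrk := sub_projOn_mem_orth Kc (Q x)
      rw [hKcOrth] at hrk
      have hQfix : Q (Q x - projOn Kc (Q x)) = Q x - projOn Kc (Q x) := by
        rw [map_sub, hQ.apply_apply]
        congr 1
        exact hKcQ _ (projOn_mem Kc (Q x))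
      have hPzero : P (Q x - projOn Kc (Q x)) = 0 := by
        have h0 : T (Q x - projOn Kc (Q x)) = 0 := hrk
        rw [hTPQ'] at h0
        rwa [hQfix] at h0
      have hr0 : Q x - projOn Kc (Q x) = 0 := hsmall' _ hQfix hPzero
      rw [sub_eq_zero] at hr0
      have hmem : Q x ∈ Kc := by rw [hr0]; exact projOn_mem _ _
      exact (projOn_eq_of hmem horth).symm
    exact hne ⟨by rw [hPA]; exact hPeq, hQeq⟩
end

section
/- Let V be a partial isometry on a Hilbert space H such that V²V* is a positive operator and cl R(V²V*) = R(V). Then T := V² is a product of two orthogonal projections, namely T = P_{R(V)} P_{N(V)^⊥}, and V is the partial isometry in the polar decomposition of T. -/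
set_option synthInstance.maxHeartbeats 1000000
set_option maxHeartbeats 1000000
set_option linter.unusedSectionVars false


open ContinuousLinearMap Submodule LinearMap

variable {H : Type*} [NormedAddCommGroup H] [InnerProductSpace ℂ H] [CompleteSpace H]

/-- `V` is a partial isometry: it is isometric on the orthogonal complement of its kernel. -/
def IsPartialIsometry (V : H →L[ℂ] H) : Prop :=
  ∀ x ∈ (LinearMap.ker (V : H →ₗ[ℂ] H))ᗮ, ‖V x‖ = ‖x‖

section AuxLemmas

omit [CompleteSpace H] in
lemma projOn_apply (K : Submodule ℂ H) [CompleteSpace K] (x : H) :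
    projOn K x = orthogonalProjection K x := rfl

lemma projOn_adjoint (K : Submodule ℂ H) [CompleteSpace K] :
    ContinuousLinearMap.adjoint (projOn K) = projOn K :=
  (isSelfAdjoint_starProjection K).adjoint_eq

lemma aux_VQ (V : H →L[ℂ] H) : V ∘L projOn (LinearMap.ker (V : H →ₗ[ℂ] H))ᗮ = V := by
  haveI : CompleteSpace (LinearMap.ker (V : H →ₗ[ℂ] H)) := (ContinuousLinearMap.isClosed_ker V).completeSpace_coe
  ext x
  have h1 : x - orthogonalProjection (LinearMap.ker (V : H →ₗ[ℂ] H))ᗮ x ∈ (LinearMap.ker (V : H →ₗ[ℂ] H))ᗮᗮ :=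
    sub_starProjection_mem_orthogonal x
  rw [Submodule.orthogonal_orthogonal] at h1
  have h2 : V (x - orthogonalProjection (LinearMap.ker (V : H →ₗ[ℂ] H))ᗮ x) = 0 := h1
  rw [map_sub, sub_eq_zero] at h2
  simpa [projOn_apply] using h2.symm

lemma aux1 (V : H →L[ℂ] H) (hV : IsPartialIsometry V) :
    ContinuousLinearMap.adjoint V ∘L V = projOn (LinearMap.ker (V : H →ₗ[ℂ] H))ᗮ := by
  set f : (LinearMap.ker (V : H →ₗ[ℂ] H))ᗮ →ₗᵢ[ℂ] H :=
    ⟨(V.comp (LinearMap.ker (V : H →ₗ[ℂ] H))ᗮ.subtypeL).toLinearMap, fun x => hV x x.2⟩ with hf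
  ext x
  apply ext_inner_right ℂ
  intro v
  have hQ : ∀ y : H, V y = V (orthogonalProjection (LinearMap.ker (V : H →ₗ[ℂ] H))ᗮ y) := by
    intro y
    conv_lhs => rw [← aux_VQ V]
    rfl
  have key : (inner ℂ (V (orthogonalProjection (LinearMap.ker (V : H →ₗ[ℂ] H))ᗮ x))
             (V (orthogonalProjection (LinearMap.ker (V : H →ₗ[ℂ] H))ᗮ v)) : ℂ) =
      inner ℂ ((orthogonalProjection (LinearMap.ker (V : H →ₗ[ℂ] H))ᗮ x : H))
            ((orthogonalProjection (LinearMap.ker (V : H →ₗ[ℂ] H))ᗮ v : H)) :=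
    f.inner_map_map (orthogonalProjection (LinearMap.ker (V : H →ₗ[ℂ] H))ᗮ x)
      (orthogonalProjection (LinearMap.ker (V : H →ₗ[ℂ] H))ᗮ v)
  have h1 : (inner ℂ ((ContinuousLinearMap.adjoint V ∘L V) x) v : ℂ) = inner ℂ (V x) (V v) :=
    ContinuousLinearMap.adjoint_inner_left V v (V x)
  rw [h1, hQ x, hQ v, key]
  have h2 : (inner ℂ ((orthogonalProjection (LinearMap.ker (V : H →ₗ[ℂ] H))ᗮ x : H))
      (v - orthogonalProjection (LinearMap.ker (V : H →ₗ[ℂ] H))ᗮ v) : ℂ) = 0 :=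
    Submodule.inner_right_of_mem_orthogonal (by exact Submodule.coe_mem _)
      (sub_starProjection_mem_orthogonal v)
  rw [inner_sub_right, sub_eq_zero] at h2
  rw [← h2, projOn_apply]

lemma aux_PV (V : H →L[ℂ] H) :
    projOn (LinearMap.range (V : H →ₗ[ℂ] H)).topologicalClosure ∘L V = V := by
  haveI : CompleteSpace (LinearMap.range (V : H →ₗ[ℂ] H)).topologicalClosure :=
    (LinearMap.range (V : H →ₗ[ℂ] H)).isClosed_topologicalClosure.completeSpace_coe
  ext x
  have hmem : V x ∈ (LinearMap.range (V : H →ₗ[ℂ] H)).topologicalClosure :=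
    (LinearMap.range (V : H →ₗ[ℂ] H)).le_topologicalClosure ⟨x, rfl⟩
  simp only [ContinuousLinearMap.comp_apply, projOn_apply]
  exact starProjection_eq_self_iff.mpr hmem

lemma aux2 (V : H →L[ℂ] H) (hV : IsPartialIsometry V) :
    V ∘L ContinuousLinearMap.adjoint V = projOn (LinearMap.range (V : H →ₗ[ℂ] H)).topologicalClosure := by
  haveI : CompleteSpace (LinearMap.range (V : H →ₗ[ℂ] H)).topologicalClosure :=
    (LinearMap.range (V : H →ₗ[ℂ] H)).isClosed_topologicalClosure.completeSpace_coe
  have hQV' : ContinuousLinearMap.adjoint V ∘L (V ∘L ContinuousLinearMap.adjoint V)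
      = ContinuousLinearMap.adjoint V := by
    rw [← ContinuousLinearMap.comp_assoc, aux1 V hV]
    have := congrArg ContinuousLinearMap.adjoint (aux_VQ V)
    rw [ContinuousLinearMap.adjoint_comp] at this
    rwa [projOn_adjoint] at this
  ext x
  have hmem : V (ContinuousLinearMap.adjoint V x) ∈ (LinearMap.range (V : H →ₗ[ℂ] H)).topologicalClosure :=
    (LinearMap.range (V : H →ₗ[ℂ] H)).le_topologicalClosure ⟨_, rfl⟩
  have hperp : ∀ w ∈ (LinearMap.range (V : H →ₗ[ℂ] H)).topologicalClosure,
      (inner ℂ (x - V (ContinuousLinearMap.adjoint V x)) w : ℂ) = 0 := by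
    intro w hw
    have hperp' : x - V (ContinuousLinearMap.adjoint V x) ∈ (LinearMap.range (V : H →ₗ[ℂ] H))ᗮ := by
      intro u hu
      obtain ⟨y, rfl⟩ := hu
      have : (inner ℂ (V y) (x - V (ContinuousLinearMap.adjoint V x)) : ℂ)
          = inner ℂ y (ContinuousLinearMap.adjoint V x
              - ContinuousLinearMap.adjoint V (V (ContinuousLinearMap.adjoint V x))) := by
        rw [← ContinuousLinearMap.adjoint_inner_right, map_sub]
      rw [ContinuousLinearMap.coe_coe, this]
      have h0 : ContinuousLinearMap.adjoint V (V (ContinuousLinearMap.adjoint V x))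
          = ContinuousLinearMap.adjoint V x := congrFun (congrArg DFunLike.coe hQV') x
      rw [h0, sub_self, inner_zero_right]
    have : x - V (ContinuousLinearMap.adjoint V x) ∈ ((LinearMap.range (V : H →ₗ[ℂ] H)).topologicalClosure)ᗮ := by
      rw [← Submodule.orthogonal_orthogonal_eq_closure, Submodule.orthogonal_orthogonal]
      exact hperp'
    exact Submodule.inner_left_of_mem_orthogonal hw this
  have := eq_starProjection_of_mem_of_inner_eq_zero (K := (LinearMap.range (V : H →ₗ[ℂ] H)).topologicalClosure)
    hmem hperp
  simp only [ContinuousLinearMap.comp_apply, projOn_apply]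
  exact this.symm

lemma projOn_idem (K : Submodule ℂ H) [CompleteSpace K] :
    projOn K ∘L projOn K = projOn K := by
  ext x
  simp only [ContinuousLinearMap.comp_apply, projOn_apply]
  congr 1
  exact orthogonalProjection_mem_subspace_eq_self _

lemma isOrthoProj_projOn (K : Submodule ℂ H) [CompleteSpace K] :
    (projOn K ∘L projOn K = projOn K) ∧ ContinuousLinearMap.adjoint (projOn K) = projOn K :=
  ⟨projOn_idem K, projOn_adjoint K⟩

end AuxLemmas

theorem stmt17 (V : H →L[ℂ] H) (hV : IsPartialIsometry V)
    (hpos : (V ∘L V ∘L ContinuousLinearMap.adjoint V).IsPositive)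
    (hran : (LinearMap.range ((V ∘L V ∘L ContinuousLinearMap.adjoint V : H →L[ℂ] H) : H →ₗ[ℂ] H)).topologicalClosure =
      LinearMap.range (V : H →ₗ[ℂ] H)) :
    (∃ P Q : H →L[ℂ] H, IsOrthoProj P ∧ IsOrthoProj Q ∧ V ∘L V = P ∘L Q) ∧
      V ∘L V =
        projOn (LinearMap.range (V : H →ₗ[ℂ] H)).topologicalClosure ∘L projOn (LinearMap.ker (V : H →ₗ[ℂ] H))ᗮ ∧
      LinearMap.ker (V : H →ₗ[ℂ] H) = LinearMap.ker ((V ∘L V : H →L[ℂ] H) : H →ₗ[ℂ] H) ∧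
      ∀ S : H →L[ℂ] H, S.IsPositive →
        S ∘L S = ContinuousLinearMap.adjoint (V ∘L V) ∘L (V ∘L V) →
        V ∘L V = V ∘L S := by
  haveI : CompleteSpace (LinearMap.range (V : H →ₗ[ℂ] H)).topologicalClosure :=
    (LinearMap.range (V : H →ₗ[ℂ] H)).isClosed_topologicalClosure.completeSpace_coe
  set Vs := ContinuousLinearMap.adjoint V with hVs
  set P := projOn (LinearMap.range (V : H →ₗ[ℂ] H)).topologicalClosure with hPdef
  set Q := projOn (LinearMap.ker (V : H →ₗ[ℂ] H))ᗮ with hQdef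
  have haPV : P ∘L V = V := by rw [hPdef]; exact aux_PV V
  have haVQ : V ∘L Q = V := by rw [hQdef]; exact aux_VQ V
  have haQ : Vs ∘L V = Q := by rw [hVs, hQdef]; exact aux1 V hV
  have hA : V ∘L V ∘L Vs = V ∘L P := by rw [hVs, hPdef, aux2 V hV]
  have hAadj : ContinuousLinearMap.adjoint (V ∘L V ∘L Vs) = V ∘L V ∘L Vs := hpos.isSelfAdjoint.adjoint_eq
  have hVP : V ∘L P = P ∘L Vs := by
    have := hAadj
    rw [hA, ContinuousLinearMap.adjoint_comp, projOn_adjoint] at this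
    exact this.symm
  -- main identity
  have hmain : V ∘L V = P ∘L Q := by
    have h1 : V ∘L V = (V ∘L P) ∘L V := by rw [ContinuousLinearMap.comp_assoc, haPV]
    rw [h1, hVP, ContinuousLinearMap.comp_assoc, haQ]
  -- kernel equality
  have hker : LinearMap.ker (V : H →ₗ[ℂ] H) = LinearMap.ker ((V ∘L V : H →L[ℂ] H) : H →ₗ[ℂ] H) := by
    apply le_antisymm
    · intro x hx
      have : V x = 0 := hx
      simp only [LinearMap.mem_ker, ContinuousLinearMap.coe_comp', Function.comp_apply,
        ContinuousLinearMap.coe_coe]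
      rw [this, map_zero]
    · intro x hx
      have hVVx : V (V x) = 0 := hx
      have hy1 : V x ∈ (LinearMap.range ((V ∘L V ∘L Vs : H →L[ℂ] H) : H →ₗ[ℂ] H)).topologicalClosure := by
        rw [hran]; exact ⟨x, rfl⟩
      have hAy : (V ∘L V ∘L Vs) (V x) = 0 := by
        rw [hA]
        have hPy : P (V x) = V x := congrFun (congrArg DFunLike.coe haPV) x
        simp only [ContinuousLinearMap.comp_apply]
        rw [hPy, hVVx]
      have hy2 : V x ∈ ((LinearMap.range ((V ∘L V ∘L Vs : H →L[ℂ] H) : H →ₗ[ℂ] H)).topologicalClosure)ᗮ := by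
        rw [← Submodule.orthogonal_orthogonal_eq_closure, Submodule.orthogonal_orthogonal]
        rintro u ⟨z, rfl⟩
        have : (inner ℂ ((V ∘L V ∘L Vs) z) (V x) : ℂ)
            = inner ℂ z ((V ∘L V ∘L Vs) (V x)) := by
          rw [← ContinuousLinearMap.adjoint_inner_right, hAadj]
        rw [ContinuousLinearMap.coe_coe, this, hAy, inner_zero_right]
      have : (inner ℂ (V x) (V x) : ℂ) = 0 :=
        Submodule.inner_left_of_mem_orthogonal hy1 hy2
      have hVx : V x = 0 := inner_self_eq_zero.mp this
      exact hVx
  refine ⟨⟨P, Q, ⟨projOn_idem _, projOn_adjoint _⟩, ⟨projOn_idem _, projOn_adjoint _⟩, hmain⟩, hmain, hker, ?_⟩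
  -- polar part
  intro S hS hS2
  have hQV : Q ∘L V = Vs ∘L ((V ∘L V ∘L Vs) ∘L V) := by
    rw [hA, ContinuousLinearMap.comp_assoc V P V, haPV, ← ContinuousLinearMap.comp_assoc, haQ]
  have hBpos : (Q ∘L V).IsPositive := by
    rw [hQV, ← ContinuousLinearMap.comp_assoc]
    exact hpos.adjoint_conj V
  have hVB : V ∘L (Q ∘L V) = V ∘L V := by
    rw [← ContinuousLinearMap.comp_assoc, haVQ]
  have hTadj : ContinuousLinearMap.adjoint (V ∘L V) = Q ∘L P := by
    rw [hmain, ContinuousLinearMap.adjoint_comp, hPdef, hQdef, projOn_adjoint, projOn_adjoint]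
  have hBB : (Q ∘L V) ∘L (Q ∘L V) = ContinuousLinearMap.adjoint (V ∘L V) ∘L (V ∘L V) := by
    rw [hTadj, ContinuousLinearMap.comp_assoc, hVB, hmain,
      ContinuousLinearMap.comp_assoc, ← ContinuousLinearMap.comp_assoc P P Q, hPdef, projOn_idem]
  have h0S : (0 : H →L[ℂ] H) ≤ S := (ContinuousLinearMap.nonneg_iff_isPositive S).2 hS
  have h0B : (0 : H →L[ℂ] H) ≤ Q ∘L V := (ContinuousLinearMap.nonneg_iff_isPositive _).2 hBpos
  have hsq : S * S = (Q ∘L V) * (Q ∘L V) := by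
    rw [ContinuousLinearMap.mul_def, ContinuousLinearMap.mul_def, hS2, hBB]
  have hSB : S = Q ∘L V := by
    have e1 : CFC.sqrt (S * S) = S := CFC.sqrt_unique rfl h0S
    have e2 : CFC.sqrt ((Q ∘L V) * (Q ∘L V)) = Q ∘L V := CFC.sqrt_unique rfl h0B
    rw [← e1, hsq, e2]
  rw [hSB, hVB]
end
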